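/- In the integral cohomology ring A = H*(C_n(ℝ³)) = ℤ[e_{ij} : 1≤i<j≤n]/I, where I is generated by e_{ij}² and e_{ij}e_{ik} − e_{ij}e_{jk} + e_{ik}e_{jk} for i<j<k, the product π = ∏_{i=2}^{n} (ē_{1i})² in A ⊗ A equals (−2)^{n−1} m ⊗ m with m = ∏_{i=2}^{n} e_{1i}, and m ≠ 0; in particular π ≠ 0. -/

import Mathlib

open MvPolynomial

/- === statement prelude (verbatim) === -/
/-- Index type for the generators `e_{ij}`, `1 ≤ i < j ≤ n`. -/
abbrev PairIdx (n : ℕ) := {p : Fin n × Fin n // p.1 < p.2}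

/-- The relations of `H^*(C_n(ℝ³); ℤ)`: the squares `e_{ij}²` and the three-term
relations `e_{ij} e_{ik} - e_{ij} e_{jk} + e_{ik} e_{jk}` for `i < j < k`. -/
def configRels (n : ℕ) : Set (MvPolynomial (PairIdx n) ℤ) :=
  {f | (∃ p : PairIdx n, f = X p ^ 2) ∨
    ∃ (i j k : Fin n) (hij : i < j) (hjk : j < k),
      f = X ⟨(i, j), hij⟩ * X ⟨(i, k), hij.trans hjk⟩
        - X ⟨(i, j), hij⟩ * X ⟨(j, k), hjk⟩
        + X ⟨(i, k), hij.trans hjk⟩ * X ⟨(j, k), hjk⟩}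

/-- The algebra `A = ℤ[e_{ij}]/I`, i.e. `H^*(C_n(ℝ³); ℤ)` (generators in degree 2,
hence commutative). -/
abbrev ConfigAlg (n : ℕ) := MvPolynomial (PairIdx n) ℤ ⧸ Ideal.span (configRels n)

/-- The generator `e_{ij}` in `ConfigAlg n`. -/
noncomputable def eGen {n : ℕ} (p : PairIdx n) : ConfigAlg n :=
  Ideal.Quotient.mk _ (X p)

/-- `e_{1i}` (with the convention `e_{11} = 1` for the dummy index), for `0 < n`. -/
noncomputable def eOne (n : ℕ) (hn : 0 < n) (i : Fin n) : ConfigAlg n :=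
  if h : (⟨0, hn⟩ : Fin n) < i then eGen ⟨(⟨0, hn⟩, i), h⟩ else 1

/-- The monomial `m = e_{12} e_{13} ⋯ e_{1n}`. -/
noncomputable def mMonomial (n : ℕ) (hn : 0 < n) : ConfigAlg n :=
  ∏ i ∈ Finset.univ.erase (⟨0, hn⟩ : Fin n), eOne n hn i

open scoped TensorProduct

/-- `ē_{1i} = 1 ⊗ e_{1i} - e_{1i} ⊗ 1` in `A ⊗ A` (no signs occur since the
generators have degree 2). -/
noncomputable def barE (n : ℕ) (hn : 0 < n) (i : Fin n) :
    ConfigAlg n ⊗[ℤ] ConfigAlg n :=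
  1 ⊗ₜ[ℤ] eOne n hn i - eOne n hn i ⊗ₜ[ℤ] 1

/- === helpers (already verified) === -/
noncomputable def sqSpan (σ : Type*) : Ideal (MvPolynomial σ ℤ) :=
  Ideal.span {g | ∃ i : σ, g = X i ^ 2}

noncomputable def bigIdeal (σ : Type*) : Ideal (MvPolynomial σ ℤ) where
  carrier := {f | ∀ μ ∈ f.support, ∃ i, 2 ≤ μ i}
  add_mem' := by
    classical
    intro a b ha hb μ hμ
    rcases Finset.mem_union.1 (MvPolynomial.support_add hμ) with h | h
    · exact ha μ h
    · exact hb μ h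
  zero_mem' := by intro μ hμ; simp at hμ
  smul_mem' := by
    classical
    intro c f hf μ hμ
    rw [smul_eq_mul] at hμ
    rcases Finset.mem_add.1 (MvPolynomial.support_mul c f hμ) with ⟨a, ha, b, hb, rfl⟩
    obtain ⟨i, hi⟩ := hf b hb
    exact ⟨i, le_trans hi (by simp)⟩

lemma sqSpan_le_bigIdeal {σ : Type*} : sqSpan σ ≤ bigIdeal σ := by
  classical
  rw [sqSpan, Ideal.span_le]
  rintro g ⟨i, rfl⟩ μ hμ
  rw [X_pow_eq_monomial, support_monomial, if_neg one_ne_zero, Finset.mem_singleton] at hμ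
  exact ⟨i, by simp [hμ]⟩

lemma prod_X_eq_monomial {σ : Type*} (t : Finset σ) :
    (∏ i ∈ t, (X i : MvPolynomial σ ℤ)) =
      monomial (∑ i ∈ t, Finsupp.single i 1) 1 := by
  classical
  induction t using Finset.induction with
  | empty => simp
  | insert _ _ hx ih =>
    rw [Finset.prod_insert hx, ih, Finset.sum_insert hx, X, monomial_mul, one_mul]

lemma smul_prod_X_not_mem {σ : Type*} (t : Finset σ) (c : ℤ) (hc : c ≠ 0) :
    c • (∏ i ∈ t, (X i : MvPolynomial σ ℤ)) ∉ sqSpan σ := by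
  classical
  intro h
  obtain ⟨i, hi⟩ := sqSpan_le_bigIdeal h (∑ i ∈ t, Finsupp.single i 1) (by
    rw [prod_X_eq_monomial, smul_monomial, smul_eq_mul, mul_one, support_monomial,
      if_neg hc]
    simp)
  have : ((∑ j ∈ t, Finsupp.single j 1) i : ℕ) ≤ 1 := by
    rw [Finsupp.finset_sum_apply]
    simp only [Finsupp.single_apply]
    rw [Finset.sum_ite_eq' t i (fun _ => 1)]
    split <;> omega
  omega

lemma mk_smul_prod_X_ne_zero {σ : Type*} (t : Finset σ) (c : ℤ) (hc : c ≠ 0) :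
    Ideal.Quotient.mk (sqSpan σ) (c • ∏ i ∈ t, X i) ≠ 0 := by
  rw [Ne, Ideal.Quotient.eq_zero_iff_mem]
  exact smul_prod_X_not_mem t c hc

/- === maps to the square-zero model === -/

noncomputable abbrev SqModel (n : ℕ) :=
  MvPolynomial (Fin n ⊕ Fin n) ℤ ⧸ sqSpan (Fin n ⊕ Fin n)

lemma mk_X_sq_zero {n : ℕ} (j : Fin n ⊕ Fin n) :
    (Ideal.Quotient.mk (sqSpan (Fin n ⊕ Fin n)) (X j)) ^ 2 = 0 := by
  rw [← map_pow, Ideal.Quotient.eq_zero_iff_mem]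
  exact Ideal.subset_span ⟨j, rfl⟩

noncomputable def ψside (n : ℕ) (s : Fin n → Fin n ⊕ Fin n) :
    MvPolynomial (PairIdx n) ℤ →ₐ[ℤ] SqModel n :=
  aeval fun p => Ideal.Quotient.mk _ (X (s p.1.2))

lemma ψside_rels (n : ℕ) (s : Fin n → Fin n ⊕ Fin n) :
    ∀ a ∈ Ideal.span (configRels n), ψside n s a = 0 := by
  intro a ha
  have h : Ideal.span (configRels n) ≤ RingHom.ker (ψside n s).toRingHom := by
    rw [Ideal.span_le]
    rintro g (⟨p, rfl⟩ | ⟨i, j, k, hij, hjk, rfl⟩) <;>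
      simp only [SetLike.mem_coe, RingHom.mem_ker, AlgHom.toRingHom_eq_coe,
        RingHom.coe_coe, map_pow, map_add, map_sub, map_mul, ψside, aeval_X]
    · exact mk_X_sq_zero _
    · have hk := mk_X_sq_zero (n := n) (s k)
      linear_combination hk
  exact RingHom.mem_ker.1 (h ha)

noncomputable def φside (n : ℕ) (s : Fin n → Fin n ⊕ Fin n) :
    ConfigAlg n →ₐ[ℤ] SqModel n :=
  Ideal.Quotient.liftₐ _ (ψside n s) (ψside_rels n s)

lemma φside_eGen (n : ℕ) (s : Fin n → Fin n ⊕ Fin n) (p : PairIdx n) :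
    φside n s (eGen p) = Ideal.Quotient.mk _ (X (s p.1.2)) := by
  rw [eGen, φside, Ideal.Quotient.liftₐ_apply]
  erw [Ideal.Quotient.lift_mk]
  simp [ψside]

lemma eOne_eq_eGen {n : ℕ} (hn : 0 < n) {i : Fin n}
    (hi : i ∈ Finset.univ.erase (⟨0, hn⟩ : Fin n)) :
    ∃ h : (⟨0, hn⟩ : Fin n) < i, eOne n hn i = eGen ⟨(⟨0, hn⟩, i), h⟩ := by
  have hne := Finset.ne_of_mem_erase hi
  have h : (⟨0, hn⟩ : Fin n) < i := by
    have : i.val ≠ 0 := fun h0 => hne (Fin.ext h0)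
    exact Nat.pos_of_ne_zero this
  exact ⟨h, by rw [eOne, dif_pos h]⟩

lemma φside_m (n : ℕ) (hn : 0 < n) (s : Fin n → Fin n ⊕ Fin n) :
    φside n s (mMonomial n hn) =
      Ideal.Quotient.mk (sqSpan (Fin n ⊕ Fin n))
        (∏ i ∈ Finset.univ.erase (⟨0, hn⟩ : Fin n), X (s i)) := by
  rw [mMonomial, map_prod]
  calc ∏ i ∈ Finset.univ.erase (⟨0, hn⟩ : Fin n), φside n s (eOne n hn i)
      = ∏ i ∈ Finset.univ.erase (⟨0, hn⟩ : Fin n),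
          Ideal.Quotient.mk (sqSpan (Fin n ⊕ Fin n)) (X (s i)) := by
        refine Finset.prod_congr rfl fun i hi => ?_
        obtain ⟨h, hEq⟩ := eOne_eq_eGen hn hi
        rw [hEq, φside_eGen]
    _ = _ := (map_prod _ _ _).symm

/- product of tmuls -/
lemma prod_tmul_prod {n : ℕ} {ι : Type*} (t : Finset ι) (f g : ι → ConfigAlg n) :
    ∏ i ∈ t, (f i ⊗ₜ[ℤ] g i) = (∏ i ∈ t, f i) ⊗ₜ[ℤ] (∏ i ∈ t, g i) := by
  classical
  induction t using Finset.induction with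
  | empty => simp [Algebra.TensorProduct.one_def]
  | insert _ _ hx ih =>
    rw [Finset.prod_insert hx, Finset.prod_insert hx, Finset.prod_insert hx, ih,
      Algebra.TensorProduct.tmul_mul_tmul]

set_option maxHeartbeats 2000000 in
/-- in `A ⊗ A`, the product `π = ∏_{i=2}^{n} (ē_{1i})²` equals
`(-2)^{n-1} · m ⊗ m` with `m = ∏_{i=2}^{n} e_{1i}`; moreover `m ≠ 0`, and in
particular `π ≠ 0`. -/
theorem prod_barE_sq (n : ℕ) (hn : 2 ≤ n) :
    (∏ i ∈ Finset.univ.erase (⟨0, by omega⟩ : Fin n), (barE n (by omega) i) ^ 2)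
        = ((-2 : ℤ) ^ (n - 1)) •
          (mMonomial n (by omega) ⊗ₜ[ℤ] mMonomial n (by omega)) ∧
      mMonomial n (by omega) ≠ 0 ∧
      (∏ i ∈ Finset.univ.erase (⟨0, by omega⟩ : Fin n), (barE n (by omega) i) ^ 2)
        ≠ 0 := by
  have h0 : 0 < n := by omega
  set F := Finset.univ.erase (⟨0, h0⟩ : Fin n) with hF
  have hcard : F.card = n - 1 := by
    rw [hF, Finset.card_erase_of_mem (Finset.mem_univ _), Finset.card_univ,
      Fintype.card_fin]
  -- square of each generator is zero
  have he2 : ∀ i ∈ F, eOne n h0 i ^ 2 = 0 := by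
    intro i hi
    obtain ⟨h, hEq⟩ := eOne_eq_eGen h0 hi
    rw [hEq, eGen, ← map_pow, Ideal.Quotient.eq_zero_iff_mem]
    exact Ideal.subset_span (Or.inl ⟨_, rfl⟩)
  -- part 1
  have hsq : ∀ i ∈ F, (barE n h0 i) ^ 2 =
      ((-2 : ℤ) : ConfigAlg n ⊗[ℤ] ConfigAlg n) * (eOne n h0 i ⊗ₜ[ℤ] eOne n h0 i) := by
    intro i hi
    set e := eOne n h0 i with he
    have hx : (1 ⊗ₜ[ℤ] e : ConfigAlg n ⊗[ℤ] ConfigAlg n) * (1 ⊗ₜ[ℤ] e) = 1 ⊗ₜ[ℤ] (e * e) := by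
      rw [Algebra.TensorProduct.tmul_mul_tmul, one_mul]
    have hy : (e ⊗ₜ[ℤ] (1 : ConfigAlg n)) * (e ⊗ₜ[ℤ] 1) = (e * e) ⊗ₜ[ℤ] 1 := by
      rw [Algebra.TensorProduct.tmul_mul_tmul, one_mul]
    have hxy : (1 ⊗ₜ[ℤ] e : ConfigAlg n ⊗[ℤ] ConfigAlg n) * (e ⊗ₜ[ℤ] 1) = e ⊗ₜ[ℤ] e := by
      rw [Algebra.TensorProduct.tmul_mul_tmul, one_mul, mul_one]
    have hee : e * e = 0 := by rw [← sq]; exact he2 i hi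
    rw [barE, ← he, sub_sq (R := ConfigAlg n ⊗[ℤ] ConfigAlg n), sq, sq, hx, hy, hee, TensorProduct.tmul_zero,
      TensorProduct.zero_tmul, mul_assoc, hxy]
    push_cast
    ring
  have part1 :
      (∏ i ∈ F, (barE n h0 i) ^ 2)
        = ((-2 : ℤ) ^ (n - 1)) • (mMonomial n h0 ⊗ₜ[ℤ] mMonomial n h0) := by
    rw [Finset.prod_congr rfl hsq, Finset.prod_mul_distrib, Finset.prod_const, hcard,
      mMonomial, ← prod_tmul_prod, zsmul_eq_mul (α := ConfigAlg n ⊗[ℤ] ConfigAlg n)]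
    push_cast [Int.cast_pow (R := ConfigAlg n ⊗[ℤ] ConfigAlg n)]
    ring
  -- part 2
  have part2 : mMonomial n h0 ≠ 0 := by
    intro h
    have h2 : φside n Sum.inl (mMonomial n h0) = 0 := by rw [h, map_zero]
    rw [φside_m] at h2
    refine mk_smul_prod_X_ne_zero (σ := Fin n ⊕ Fin n) (F.map ⟨Sum.inl, Sum.inl_injective⟩) 1 one_ne_zero ?_
    rw [one_smul, Finset.prod_map]
    simpa [hF] using h2
  -- part 3
  have part3 : (∏ i ∈ F, (barE n h0 i) ^ 2) ≠ 0 := by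
    rw [part1]
    intro h
    have h2 := congrArg (Algebra.TensorProduct.productMap (φside n Sum.inl) (φside n Sum.inr)) h
    rw [map_zero, map_zsmul, Algebra.TensorProduct.productMap_apply_tmul,
      φside_m, φside_m, ← map_mul, ← map_zsmul] at h2
    refine mk_smul_prod_X_ne_zero (F.disjSum F) ((-2) ^ (n - 1)) (pow_ne_zero _ (by norm_num)) ?_
    rw [Finset.prod_disjSum]
    simpa [hF] using h2
  exact ⟨part1, part2, part3⟩
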